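/- The tie-breaker effect: let R₀ ∈ C(S×A) and suppose for some state s₀ ∈ S there exist two distinct optimal actions a₁, a₂ ∈ A*(s₀;R₀). Then for every ε > 0 there exists R' ∈ C(S×A) with ‖R' − R₀‖∞ ≤ ε and Q*_{R'}(s₀,a₂) > Q*_{R'}(s₀,a₁); that is, a₂ becomes strictly preferred over a₁ under the perturbed reward. -/
import Mathlib


open MeasureTheory ProbabilityTheory Filter Topology

section Aux

variable {S A : Type*} [MetricSpace S] [CompactSpace S]
  [MetricSpace A] [CompactSpace A] [Nonempty A]

lemma aux_bddAbove (Q : C(S × A, ℝ)) (s : S) :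
    BddAbove (Set.range fun a : A => Q (s, a)) := by
  refine ⟨‖Q‖, ?_⟩
  rintro _ ⟨a, rfl⟩
  exact (le_abs_self _).trans (Q.norm_coe_le_norm (s, a))

/-- If `|f a - g a| ≤ c` for all `a`, then `|⨆ f - ⨆ g| ≤ c`. -/
lemma aux_sup_diff {f g : A → ℝ} (hf : BddAbove (Set.range f))
    (hg : BddAbove (Set.range g)) {c : ℝ} (h : ∀ a, |f a - g a| ≤ c) :
    |(⨆ a, f a) - ⨆ a, g a| ≤ c := by
  rw [abs_sub_le_iff]
  constructor
  · refine sub_le_iff_le_add.2 (ciSup_le fun a => ?_)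
    have h1 := (abs_sub_le_iff.1 (h a)).1
    have h3 := le_ciSup hg a
    linarith
  · refine sub_le_iff_le_add.2 (ciSup_le fun a => ?_)
    have h1 := (abs_sub_le_iff.1 (h a)).2
    have h3 := le_ciSup hf a
    linarith

/-- Continuity of `s ↦ ⨆ a, Q (s, a)` for continuous `Q` on a compact product. -/
lemma aux_cont_sup (Q : C(S × A, ℝ)) :
    Continuous fun s : S => ⨆ a : A, Q (s, a) := by
  rw [Metric.continuous_iff]
  intro s ε hε
  have hu : UniformContinuous Q := CompactSpace.uniformContinuous_of_continuous Q.continuous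
  rw [Metric.uniformContinuous_iff] at hu
  obtain ⟨δ, hδ, hQ⟩ := hu (ε / 2) (by linarith)
  refine ⟨δ, hδ, fun t ht => ?_⟩
  have key : ∀ a : A, |Q (t, a) - Q (s, a)| ≤ ε / 2 := by
    intro a
    have : dist ((t, a) : S × A) (s, a) < δ := by
      simpa [Prod.dist_eq, hδ] using ht
    exact (le_of_lt (hQ this))
  have := aux_sup_diff (aux_bddAbove Q t) (aux_bddAbove Q s) key
  calc dist (⨆ a : A, Q (t, a)) (⨆ a : A, Q (s, a))
      ≤ ε / 2 := by rwa [Real.dist_eq]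
    _ < ε := by linarith

end Aux

/-- The tie-breaker effect: if `a₁ ≠ a₂` are two optimal actions in
`A*(s₀;R₀)`, then for every `ε > 0` there is `R'` with `‖R' - R₀‖ ≤ ε` and
`Q*_{R'}(s₀,a₂) > Q*_{R'}(s₀,a₁)`. Here `Qstar R` denotes the unique Bellman fixed
point for reward `R`. -/
theorem tie_breaker_effect
    {S A : Type*}
    [MetricSpace S] [CompactSpace S] [MeasurableSpace S] [BorelSpace S]
    [MetricSpace A] [CompactSpace A] [Nonempty A] [MeasurableSpace A] [BorelSpace A]
    (γ : ℝ) (hγ0 : 0 ≤ γ) (hγ1 : γ < 1)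
    (P : Kernel (S × A) S) [IsMarkovKernel P]
    (hFeller : ∀ f : C(S, ℝ), Continuous fun p : S × A => ∫ s', f s' ∂(P p))
    (Qstar : C(S × A, ℝ) → C(S × A, ℝ))
    (hQstar : ∀ (R : C(S × A, ℝ)) (p : S × A),
      Qstar R p = R p + γ * ∫ s', (⨆ a' : A, Qstar R (s', a')) ∂(P p))
    (R₀ : C(S × A, ℝ)) (s₀ : S) (a₁ a₂ : A) (hne : a₁ ≠ a₂)
    (ha₁ : ∀ b : A, Qstar R₀ (s₀, b) ≤ Qstar R₀ (s₀, a₁))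
    (ha₂ : ∀ b : A, Qstar R₀ (s₀, b) ≤ Qstar R₀ (s₀, a₂)) :
    ∀ ε > (0 : ℝ), ∃ R' : C(S × A, ℝ),
      ‖R' - R₀‖ ≤ ε ∧ Qstar R' (s₀, a₁) < Qstar R' (s₀, a₂) := by
  intro ε hε
  set δ : ℝ := ε / 2 with hδdef
  have hδ : 0 < δ := by positivity
  have hd : (0 : ℝ) < dist a₂ a₁ := dist_pos.2 (Ne.symm hne)
  -- bump function on actions
  set φ : A → ℝ := fun a => min 1 (dist a a₁ / dist a₂ a₁) with hφdef
  have hφcont : Continuous φ :=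
    continuous_const.min ((continuous_id.dist continuous_const).div_const _)
  have hφ1 : φ a₁ = 0 := by simp [hφdef]
  have hφ2 : φ a₂ = 1 := by simp [hφdef, div_self hd.ne']
  have hφ01 : ∀ a, 0 ≤ φ a ∧ φ a ≤ 1 := fun a =>
    ⟨le_min zero_le_one (div_nonneg dist_nonneg hd.le), min_le_left _ _⟩
  -- the perturbation h
  set h : C(S × A, ℝ) := ⟨fun p => δ * φ p.2, by
      exact (continuous_const.mul (hφcont.comp continuous_snd))⟩ with hhdef
  have hhabs : ∀ p : S × A, |h p| ≤ δ := by
    intro p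
    have h01 := hφ01 p.2
    simp only [hhdef, ContinuousMap.coe_mk]
    rw [abs_of_nonneg (by nlinarith [h01.1])]
    nlinarith [h01.1, h01.2]
  -- candidate fixed point
  set Q' : C(S × A, ℝ) := Qstar R₀ + h with hQ'def
  -- value functions
  set V' : C(S, ℝ) := ⟨fun s => ⨆ a : A, Q' (s, a), aux_cont_sup Q'⟩ with hV'def
  set V₀ : C(S, ℝ) := ⟨fun s => ⨆ a : A, Qstar R₀ (s, a), aux_cont_sup (Qstar R₀)⟩
    with hV₀def
  -- perturbed reward
  set R' : C(S × A, ℝ) := ⟨fun p => Q' p - γ * ∫ s', V' s' ∂(P p),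
    Q'.continuous.sub (continuous_const.mul (hFeller V'))⟩ with hR'def
  have hint : ∀ (f : C(S, ℝ)) (p : S × A), Integrable f (P p) := fun f p =>
    f.continuous.integrable_of_hasCompactSupport (HasCompactSupport.of_compactSpace _)
  -- |V' - V₀| ≤ δ pointwise
  have hVdiff : ∀ s : S, |V' s - V₀ s| ≤ δ := by
    intro s
    refine aux_sup_diff (aux_bddAbove Q' s) (aux_bddAbove (Qstar R₀) s) fun a => ?_
    have : Q' (s, a) - Qstar R₀ (s, a) = h (s, a) := by simp [hQ'def]
    rw [this]; exact hhabs (s, a)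
  -- Qstar R' = Q' (uniqueness of the fixed point, contraction estimate)
  have hfix : Qstar R' = Q' := by
    set D : C(S × A, ℝ) := Qstar R' - Q' with hDdef
    set W : C(S, ℝ) := ⟨fun s => ⨆ a : A, Qstar R' (s, a), aux_cont_sup (Qstar R')⟩
      with hWdef
    have hDle : ∀ p : S × A, |D p| ≤ γ * ‖D‖ := by
      intro p
      have h1 : Qstar R' p = Q' p - γ * ∫ s', V' s' ∂(P p)
          + γ * ∫ s', W s' ∂(P p) := by
        have := hQstar R' p
        simpa [hR'def, hWdef] using this
      have hDp : D p = γ * ∫ s', (W s' - V' s') ∂(P p) := by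
        rw [integral_sub (hint W p) (hint V' p)]
        simp only [hDdef, ContinuousMap.sub_apply]
        rw [h1]; ring
      rw [hDp, abs_mul, abs_of_nonneg hγ0]
      refine mul_le_mul_of_nonneg_left ?_ hγ0
      have hb : |∫ s', (W s' - V' s') ∂(P p)| ≤ ∫ s', ‖D‖ ∂(P p) := by
        have habs : |∫ s', (W s' - V' s') ∂(P p)| ≤ ∫ s', |W s' - V' s'| ∂(P p) := by
          simpa [Real.norm_eq_abs] using
            norm_integral_le_integral_norm (μ := P p) (fun s' => W s' - V' s')
        refine habs.trans ?_
        refine integral_mono_of_nonneg (Filter.Eventually.of_forall fun s => abs_nonneg _)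
          (integrable_const _) (Filter.Eventually.of_forall fun s => ?_)
        refine aux_sup_diff (aux_bddAbove (Qstar R') s) (aux_bddAbove Q' s) fun a => ?_
        have : Qstar R' (s, a) - Q' (s, a) = D (s, a) := by simp [hDdef]
        rw [this]
        simpa [Real.norm_eq_abs] using D.norm_coe_le_norm (s, a)
      simpa using hb
    have hnorm : ‖D‖ ≤ γ * ‖D‖ := by
      refine (ContinuousMap.norm_le _ (by positivity)).2 fun p => ?_
      simpa [Real.norm_eq_abs] using hDle p
    have hD0 : ‖D‖ = 0 := by nlinarith [norm_nonneg D]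
    have : D = 0 := norm_eq_zero.mp hD0
    have := sub_eq_zero.mp (by simpa [hDdef] using this)
    exact this
  refine ⟨R', ?_, ?_⟩
  · -- norm bound
    refine (ContinuousMap.norm_le _ (by positivity)).2 fun p => ?_
    have h0 : R₀ p = Qstar R₀ p - γ * ∫ s', V₀ s' ∂(P p) := by
      have := hQstar R₀ p
      simp only [hV₀def, ContinuousMap.coe_mk]
      linarith
    have hdiff : (R' - R₀) p = h p - γ * ∫ s', (V' s' - V₀ s') ∂(P p) := by
      rw [integral_sub (hint V' p) (hint V₀ p)]
      simp only [ContinuousMap.sub_apply, hR'def, ContinuousMap.coe_mk, h0, hQ'def,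
        ContinuousMap.add_apply]
      ring
    have hb : |∫ s', (V' s' - V₀ s') ∂(P p)| ≤ δ := by
      have habs : |∫ s', (V' s' - V₀ s') ∂(P p)| ≤ ∫ s', |V' s' - V₀ s'| ∂(P p) := by
        simpa [Real.norm_eq_abs] using
          norm_integral_le_integral_norm (μ := P p) (fun s' => V' s' - V₀ s')
      refine habs.trans ?_
      have : ∫ s', |V' s' - V₀ s'| ∂(P p) ≤ ∫ _, δ ∂(P p) := by
        refine integral_mono_of_nonneg (Filter.Eventually.of_forall fun s => abs_nonneg _)
          (integrable_const _) (Filter.Eventually.of_forall fun s => hVdiff s)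
      simpa using this
    have : |(R' - R₀) p| ≤ δ + γ * δ := by
      rw [hdiff]
      refine (abs_sub (h p) _).trans ?_
      have := hhabs p
      have h2 : |γ * ∫ s', (V' s' - V₀ s') ∂(P p)| ≤ γ * δ := by
        rw [abs_mul, abs_of_nonneg hγ0]
        exact mul_le_mul_of_nonneg_left hb hγ0
      linarith
    have hfin : δ + γ * δ ≤ ε := by
      have : γ * δ ≤ δ := by nlinarith
      simp only [hδdef] at *
      linarith
    simpa [Real.norm_eq_abs] using this.trans hfin
  · -- strict inequality
    rw [hfix]
    have heq : Qstar R₀ (s₀, a₁) = Qstar R₀ (s₀, a₂) := le_antisymm (ha₂ a₁) (ha₁ a₂)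
    simp only [hQ'def, ContinuousMap.add_apply, hhdef, ContinuousMap.coe_mk, hφ1, hφ2]
    rw [heq]
    simpa using hδ
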